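/- Let P = ⋂_{j=1}^{N} {x ∈ ℝⁿ : ⟨q_j, x⟩ ≥ r_j} be a nonempty polyhedron. Then CoSp(q_1,…,q_N) = ⋃ {F*|P : F a nonempty face of P}. -/

import Mathlib

open scoped RealInnerProductSpace

noncomputable section

/-- A subset `F ⊆ P` is a face of `P` if there are `q ∈ ℝⁿ` and `ρ ∈ ℝ` with
`⟨q, u⟩ = ρ` for every `u ∈ F` and `ρ < ⟨q, y⟩` for every `y ∈ P \ F`. -/
def IsFace {n : ℕ} (P F : Set (EuclideanSpace ℝ (Fin n))) : Prop :=
  F ⊆ P ∧ ∃ (q : EuclideanSpace ℝ (Fin n)) (ρ : ℝ),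
    (∀ u ∈ F, ⟪q, u⟫ = ρ) ∧ ∀ y ∈ P \ F, ρ < ⟪q, y⟫

/-- The cone `F*|P` of a face `F` of `P`. -/
def coneOf {n : ℕ} (P F : Set (EuclideanSpace ℝ (Fin n))) :
    Set (EuclideanSpace ℝ (Fin n)) :=
  {q | ∃ ρ : ℝ, (∀ u ∈ F, ⟪q, u⟫ = ρ) ∧ ∀ y ∈ P \ F, ρ ≤ ⟪q, y⟫}

open Finset

/-- Homogeneous Farkas lemma: if every `y` in the cone dual to the `a i` has
`0 ≤ ⟪x, y⟫`, then `x` is a nonnegative combination of the `a i`. -/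
lemma farkas_cone {E : Type*} [NormedAddCommGroup E] [InnerProductSpace ℝ E] :
    ∀ {N : ℕ} (a : Fin N → E) (x : E),
    (∀ y : E, (∀ i, 0 ≤ ⟪a i, y⟫) → 0 ≤ ⟪x, y⟫) →
    ∃ c : Fin N → ℝ, (∀ i, 0 ≤ c i) ∧ x = ∑ i, c i • a i := by
  intro N
  induction N with
  | zero =>
    intro a x h
    refine ⟨0, fun i => le_rfl, ?_⟩
    have h1 : 0 ≤ ⟪x, -x⟫ := h (-x) (fun i => i.elim0)
    rw [inner_neg_right] at h1
    have h2 : (0:ℝ) ≤ ⟪x, x⟫ := real_inner_self_nonneg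
    have hx : ⟪x, x⟫ = 0 := le_antisymm (by linarith) h2
    simpa using inner_self_eq_zero.mp hx
  | succ N ih =>
    intro a x h
    by_cases hc : ∀ y, (∀ i : Fin N, 0 ≤ ⟪a i.castSucc, y⟫) → 0 ≤ ⟪x, y⟫
    · obtain ⟨c, hc0, hcs⟩ := ih (fun i => a i.castSucc) x hc
      refine ⟨Fin.snoc c 0, ?_, ?_⟩
      · intro i
        induction i using Fin.lastCases with
        | last => simp
        | cast i => simpa using hc0 i
      · rw [Fin.sum_univ_castSucc]
        simpa using hcs
    · push_neg at hc
      obtain ⟨z, hz, hxz⟩ := hc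
      have hlz : ⟪a (Fin.last N), z⟫ < 0 := by
        by_contra h'
        push_neg at h'
        refine absurd (h z ?_) (not_le.mpr hxz)
        intro i
        induction i using Fin.lastCases with
        | last => exact h'
        | cast i => exact hz i
      set d := ⟪a (Fin.last N), z⟫ with hd
      have hd0 : d ≠ 0 := ne_of_lt hlz
      set μ := ⟪x, z⟫ / d with hμdef
      have hμ : 0 < μ := div_pos_of_neg_of_neg hxz hlz
      set t : Fin N → ℝ := fun i => ⟪a i.castSucc, z⟫ / d with ht
      have ht0 : ∀ i, t i ≤ 0 := fun i => div_nonpos_of_nonneg_of_nonpos (hz i) (le_of_lt hlz)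
      set b : Fin N → E := fun i => a i.castSucc - t i • a (Fin.last N) with hb
      set x' := x - μ • a (Fin.last N) with hx'
      have key : ∀ y, (∀ i, 0 ≤ ⟪b i, y⟫) → 0 ≤ ⟪x', y⟫ := by
        intro y hy
        set y' := y - (⟪a (Fin.last N), y⟫ / d) • z with hy'
        have hlast : ⟪a (Fin.last N), y'⟫ = 0 := by
          rw [hy', inner_sub_right, real_inner_smul_right]
          field_simp
          rw [← hd]; ring
        have hi : ∀ i : Fin N, ⟪a i.castSucc, y'⟫ = ⟪b i, y⟫ := by
          intro i
          rw [hy', hb, inner_sub_right, inner_sub_left, real_inner_smul_right,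
            real_inner_smul_left, ht]
          field_simp
        have h0 := h y' (by
          intro i
          induction i using Fin.lastCases with
          | last => exact le_of_eq hlast.symm
          | cast i => exact (hi i) ▸ hy i)
        have hxeq : ⟪x, y'⟫ = ⟪x', y⟫ := by
          rw [hy', hx', inner_sub_right, inner_sub_left, real_inner_smul_right,
            real_inner_smul_left, hμdef]
          field_simp
        rwa [hxeq] at h0
      obtain ⟨c, hc0, hcs⟩ := ih b x' key
      refine ⟨Fin.snoc c (μ - ∑ i, c i * t i), ?_, ?_⟩
      · intro i
        induction i using Fin.lastCases with
        | last =>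
          simp only [Fin.snoc_last]
          have : ∑ i, c i * t i ≤ 0 :=
            Finset.sum_nonpos fun i _ => mul_nonpos_of_nonneg_of_nonpos (hc0 i) (ht0 i)
          linarith
        | cast i => simpa using hc0 i
      · rw [Fin.sum_univ_castSucc]
        simp only [Fin.snoc_castSucc, Fin.snoc_last]
        have : x = x' + μ • a (Fin.last N) := by rw [hx']; abel
        rw [this, hcs, hb]
        simp only [smul_sub, smul_smul]
        rw [Finset.sum_sub_distrib, ← Finset.sum_smul, sub_smul]
        abel


set_option linter.unusedSectionVars false

variable {E : Type*} [NormedAddCommGroup E] [InnerProductSpace ℝ E]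

lemma withlp_sum_fst {ι : Type*} (s : Finset ι) (f : ι → WithLp 2 (E × ℝ)) :
    (∑ i ∈ s, f i).fst = ∑ i ∈ s, (f i).fst := by
  classical
  induction s using Finset.cons_induction with
  | empty => exact WithLp.zero_fst
  | cons a s ha ih => rw [Finset.sum_cons, Finset.sum_cons, WithLp.add_fst, ih]

lemma withlp_sum_snd {ι : Type*} (s : Finset ι) (f : ι → WithLp 2 (E × ℝ)) :
    (∑ i ∈ s, f i).snd = ∑ i ∈ s, (f i).snd := by
  classical
  induction s using Finset.cons_induction with
  | empty => exact WithLp.zero_snd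
  | cons a s ha ih => rw [Finset.sum_cons, Finset.sum_cons, WithLp.add_snd, ih]

/-- pair constructor -/
noncomputable def pr (v : E) (s : ℝ) : WithLp 2 (E × ℝ) := (WithLp.equiv 2 (E × ℝ)).symm (v, s)

lemma pr_fst (v : E) (s : ℝ) : (pr v s).fst = v := rfl
lemma pr_snd (v : E) (s : ℝ) : (pr v s).snd = s := rfl

lemma pr_inner_left (v : E) (s : ℝ) (Y : WithLp 2 (E × ℝ)) :
    ⟪pr v s, Y⟫ = ⟪v, Y.fst⟫ + s * Y.snd := by
  rw [WithLp.prod_inner_apply]; change ⟪v, Y.fst⟫ + ⟪s, Y.snd⟫ = _; rw [Real.inner_apply]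

/-- Farkas infeasibility. -/
lemma farkas_infeasible {M : ℕ} (a : Fin M → E) (b : Fin M → ℝ)
    (hempty : ∀ y : E, ¬ ∀ i, b i ≤ ⟪a i, y⟫) :
    ∃ c : Fin M → ℝ, (∀ i, 0 ≤ c i) ∧ (∑ i, c i • a i) = 0 ∧ 0 < ∑ i, c i * b i := by
  have h : ∀ Y : WithLp 2 (E × ℝ), (∀ i, 0 ≤ ⟪pr (a i) (-(b i)), Y⟫) →
      0 ≤ ⟪pr (0 : E) (-1), Y⟫ := by
    intro Y hY
    have hY' : ∀ i, 0 ≤ ⟪a i, Y.fst⟫ + (-(b i)) * Y.snd := by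
      intro i; have := hY i; rwa [pr_inner_left] at this
    have hsnd : Y.snd ≤ 0 := by
      by_contra hpos
      push_neg at hpos
      refine hempty ((Y.snd)⁻¹ • Y.fst) (fun i => ?_)
      rw [real_inner_smul_right, ← sub_nonneg]
      have h2 : 0 ≤ (Y.snd)⁻¹ * (⟪a i, Y.fst⟫ + (-(b i)) * Y.snd) :=
        mul_nonneg (inv_nonneg.mpr hpos.le) (hY' i)
      calc (0:ℝ) ≤ (Y.snd)⁻¹ * (⟪a i, Y.fst⟫ + (-(b i)) * Y.snd) := h2
        _ = (Y.snd)⁻¹ * ⟪a i, Y.fst⟫ - b i := by field_simp; ring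
    rw [pr_inner_left, inner_zero_left]
    nlinarith
  obtain ⟨c, hc0, hcs⟩ := farkas_cone (fun i => pr (a i) (-(b i))) (pr (0 : E) (-1)) h
  have hfst := congrArg WithLp.fst hcs
  have hsnd := congrArg WithLp.snd hcs
  rw [withlp_sum_fst] at hfst
  rw [withlp_sum_snd] at hsnd
  simp only [WithLp.smul_fst, WithLp.smul_snd, pr_fst, pr_snd] at hfst hsnd
  refine ⟨c, hc0, hfst.symm, ?_⟩
  have : (-1 : ℝ) = ∑ i, c i • (-(b i)) := hsnd
  have h2 : ∑ i, c i * b i = 1 := by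
    have := this
    simp only [smul_eq_mul, mul_neg] at this
    rw [Finset.sum_neg_distrib] at this
    linarith
  rw [h2]; norm_num

/-- Affine Farkas lemma / LP duality direction. -/
lemma farkas_affine {N : ℕ} (q : Fin N → E) (r : Fin N → ℝ)
    (hne : ∃ y0 : E, ∀ j, r j ≤ ⟪q j, y0⟫) (x : E) (ρ : ℝ)
    (h : ∀ y : E, (∀ j, r j ≤ ⟪q j, y⟫) → ρ ≤ ⟪x, y⟫) :
    ∃ c : Fin N → ℝ, (∀ j, 0 ≤ c j) ∧ x = ∑ j, c j • q j ∧ ρ ≤ ∑ j, c j * r j := by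
  obtain ⟨y0, hy0⟩ := hne
  -- homogenized system: vectors (q j, -r j) for j < N, plus (0, 1); target (x, -ρ)
  set A : Fin (N + 1) → WithLp 2 (E × ℝ) :=
    Fin.snoc (fun j : Fin N => pr (q j) (-(r j))) (pr (0 : E) 1) with hA
  have h' : ∀ Y : WithLp 2 (E × ℝ), (∀ i, 0 ≤ ⟪A i, Y⟫) → 0 ≤ ⟪pr x (-ρ), Y⟫ := by
    intro Y hY
    have ht : 0 ≤ Y.snd := by
      have := hY (Fin.last N)
      rw [hA] at this
      simp only [Fin.snoc_last] at this
      rwa [pr_inner_left, inner_zero_left, one_mul, zero_add] at this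
    have hq : ∀ j : Fin N, 0 ≤ ⟪q j, Y.fst⟫ - r j * Y.snd := by
      intro j
      have := hY j.castSucc
      rw [hA] at this
      simp only [Fin.snoc_castSucc] at this
      rw [pr_inner_left] at this
      linarith
    rw [pr_inner_left]
    rcases eq_or_lt_of_le ht with hz | hpos
    · -- Y.snd = 0 : recession direction
      have hrec : 0 ≤ ⟪x, Y.fst⟫ := by
        by_contra hneg
        push_neg at hneg
        -- take s large
        have hnum : 0 ≤ ⟪x, y0⟫ - ρ := by linarith [h y0 hy0]
        have hden : 0 < -⟪x, Y.fst⟫ := by linarith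
        set s := (⟪x, y0⟫ - ρ) / (-⟪x, Y.fst⟫) + 1 with hs
        have hspos : 0 < s := by positivity
        have hmem : ∀ j, r j ≤ ⟪q j, y0 + s • Y.fst⟫ := by
          intro j
          rw [inner_add_right, real_inner_smul_right]
          have := hq j
          rw [← hz] at this
          nlinarith [hy0 j]
        have hfin := h _ hmem
        rw [inner_add_right, real_inner_smul_right, hs] at hfin
        have heq : ((⟪x, y0⟫ - ρ) / (-⟪x, Y.fst⟫)) * ⟪x, Y.fst⟫ = -(⟪x, y0⟫ - ρ) := by
          field_simp; rw [mul_div_assoc, div_self hneg.ne, mul_one]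
        nlinarith
      rw [← hz]
      simpa using hrec
    · -- Y.snd > 0
      have hmem : ∀ j, r j ≤ ⟪q j, (Y.snd)⁻¹ • Y.fst⟫ := by
        intro j
        rw [real_inner_smul_right]
        have := hq j
        rw [← sub_nonneg]
        have h2 : 0 ≤ (Y.snd)⁻¹ * (⟪q j, Y.fst⟫ - r j * Y.snd) :=
          mul_nonneg (inv_nonneg.mpr hpos.le) (hq j)
        calc (0:ℝ) ≤ (Y.snd)⁻¹ * (⟪q j, Y.fst⟫ - r j * Y.snd) := h2
          _ = (Y.snd)⁻¹ * ⟪q j, Y.fst⟫ - r j := by field_simp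
      have := h _ hmem
      rw [real_inner_smul_right] at this
      have h4 := mul_le_mul_of_nonneg_left this hpos.le
      have h5 : Y.snd * ((Y.snd)⁻¹ * ⟪x, Y.fst⟫) = ⟪x, Y.fst⟫ := by field_simp
      rw [h5] at h4
      nlinarith
  obtain ⟨c, hc0, hcs⟩ := farkas_cone A (pr x (-ρ)) h'
  have hfst := congrArg WithLp.fst hcs
  have hsnd := congrArg WithLp.snd hcs
  rw [withlp_sum_fst] at hfst
  rw [withlp_sum_snd] at hsnd
  rw [Fin.sum_univ_castSucc] at hfst hsnd
  simp only [WithLp.smul_fst, WithLp.smul_snd, hA, Fin.snoc_castSucc, Fin.snoc_last,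
    pr_fst, pr_snd, smul_zero, smul_eq_mul, mul_neg, mul_one] at hfst hsnd
  refine ⟨fun j => c j.castSucc, fun j => hc0 j.castSucc, ?_, ?_⟩
  · rw [hfst]; simp
  · have : -ρ = ∑ j : Fin N, -(c j.castSucc * r j) + c (Fin.last N) := hsnd
    rw [Finset.sum_neg_distrib] at this
    have := hc0 (Fin.last N)
    linarith


/-- For a nonempty polyhedron `P = ⋂ⱼ {x : ⟨qⱼ, x⟩ ≥ rⱼ}`,
`CoSp(q₁,…,q_N) = ⋃ {F*|P : F a nonempty face of P}`. -/
theorem stmt9 {n N : ℕ} (q : Fin N → EuclideanSpace ℝ (Fin n)) (r : Fin N → ℝ)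
    (P : Set (EuclideanSpace ℝ (Fin n)))
    (hP : P = {x | ∀ j, r j ≤ ⟪q j, x⟫}) (hne : P.Nonempty) :
    {x | ∃ c : Fin N → ℝ, (∀ j, 0 ≤ c j) ∧ x = ∑ j, c j • q j} =
      {x | ∃ F, IsFace P F ∧ F.Nonempty ∧ x ∈ coneOf P F} := by
  ext x
  simp only [Set.mem_setOf_eq]
  constructor
  · rintro ⟨c, hc0, hcx⟩
    -- value of x on points of P
    have hxval : ∀ y, ⟪x, y⟫ = ∑ j, c j * ⟪q j, y⟫ := by
      intro y
      rw [hcx, sum_inner]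
      exact Finset.sum_congr rfl fun j _ => real_inner_smul_left _ _ _
    have hlow : ∀ y ∈ P, ∑ j, c j * r j ≤ ⟪x, y⟫ := by
      intro y hy
      rw [hxval]
      refine Finset.sum_le_sum fun j _ => ?_
      exact mul_le_mul_of_nonneg_left (by rw [hP] at hy; exact hy j) (hc0 j)
    set S : Set ℝ := (fun y => ⟪x, y⟫) '' P with hS
    have hSne : S.Nonempty := hne.image _
    have hSbdd : BddBelow S := ⟨∑ j, c j * r j, by rintro _ ⟨y, hy, rfl⟩; exact hlow y hy⟩
    set m := sInf S with hm
    have hmle : ∀ y ∈ P, m ≤ ⟪x, y⟫ := fun y hy => csInf_le hSbdd ⟨y, hy, rfl⟩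
    -- attainment of the infimum
    have hattain : ∃ y ∈ P, ⟪x, y⟫ = m := by
      by_contra hno
      push_neg at hno
      have hempty : ∀ y : EuclideanSpace ℝ (Fin n),
          ¬ ∀ i : Fin (N + 1), (Fin.snoc r (-m) : Fin (N+1) → ℝ) i ≤ ⟪(Fin.snoc q (-x) : Fin (N+1) → EuclideanSpace ℝ (Fin n)) i, y⟫ := by
        intro y hy
        have hyP : y ∈ P := by
          rw [hP]
          intro j
          have := hy j.castSucc
          simpa using this
        have hlast := hy (Fin.last N)
        simp only [Fin.snoc_last, inner_neg_left] at hlast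
        exact hno y hyP (le_antisymm (by linarith) (hmle y hyP))
      obtain ⟨c', hc'0, hsum0, hpos⟩ := farkas_infeasible (Fin.snoc q (-x) : Fin (N+1) → EuclideanSpace ℝ (Fin n)) (Fin.snoc r (-m)) hempty
      rw [Fin.sum_univ_castSucc] at hsum0 hpos
      simp only [Fin.snoc_castSucc, Fin.snoc_last, smul_neg, mul_neg] at hsum0 hpos
      set lam := c' (Fin.last N) with hlam
      have hlam0 : 0 ≤ lam := hc'0 (Fin.last N)
      -- inner the vector equation with any y ∈ P
      have hval : ∀ y, ∑ j : Fin N, c' j.castSucc * ⟪q j, y⟫ = lam * ⟪x, y⟫ := by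
        intro y
        have := congrArg (fun v => ⟪v, y⟫) hsum0
        simp only [inner_zero_left] at this
        rw [inner_add_left, sum_inner, inner_neg_left, real_inner_smul_left] at this
        have h2 : ∀ j : Fin N, ⟪c' j.castSucc • q j, y⟫ = c' j.castSucc * ⟪q j, y⟫ :=
          fun j => real_inner_smul_left _ _ _
        rw [Finset.sum_congr rfl fun j _ => h2 j] at this
        linarith
      rcases eq_or_lt_of_le hlam0 with hz | hpos'
      · obtain ⟨y0, hy0⟩ := hne
        have h1 := hval y0
        rw [← hz] at h1
        have h2 : ∑ j : Fin N, c' j.castSucc * r j ≤ ∑ j : Fin N, c' j.castSucc * ⟪q j, y0⟫ := by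
          refine Finset.sum_le_sum fun j _ => ?_
          exact mul_le_mul_of_nonneg_left (by rw [hP] at hy0; exact hy0 j) (hc'0 j.castSucc)
        rw [← hz] at hpos
        simp only [zero_mul, neg_zero, add_zero] at hpos
        simp only [zero_mul] at h1
        linarith
      · -- lam > 0 : ρ' = (∑ c' r)/lam is a lower bound > m
        set ρ' := (∑ j : Fin N, c' j.castSucc * r j) / lam with hρ'
        have hρ'lb : ∀ z ∈ S, ρ' ≤ z := by
          rintro _ ⟨y, hy, rfl⟩
          have h1 := hval y
          have h2 : ∑ j : Fin N, c' j.castSucc * r j ≤ ∑ j : Fin N, c' j.castSucc * ⟪q j, y⟫ := by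
            refine Finset.sum_le_sum fun j _ => ?_
            exact mul_le_mul_of_nonneg_left (by rw [hP] at hy; exact hy j) (hc'0 j.castSucc)
          rw [hρ', div_le_iff₀ hpos']
          nlinarith
        have hle : ρ' ≤ m := le_csInf hSne hρ'lb
        have : lam * m < ∑ j : Fin N, c' j.castSucc * r j := by linarith
        rw [hρ'] at hle
        rw [div_le_iff₀ hpos'] at hle
        nlinarith
    obtain ⟨y0, hy0P, hy0m⟩ := hattain
    refine ⟨{y ∈ P | ⟪x, y⟫ = m}, ⟨fun y hy => hy.1, x, m, fun u hu => hu.2, ?_⟩,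
      ⟨y0, hy0P, hy0m⟩, m, fun u hu => hu.2, fun y hy => hmle y hy.1⟩
    rintro y ⟨hyP, hyF⟩
    exact lt_of_le_of_ne (hmle y hyP) fun h => hyF ⟨hyP, h.symm⟩
  · rintro ⟨F, ⟨hFP, -⟩, ⟨u0, hu0⟩, ρ, hρeq, hρle⟩
    have hbound : ∀ y : EuclideanSpace ℝ (Fin n), (∀ j, r j ≤ ⟪q j, y⟫) → ρ ≤ ⟪x, y⟫ := by
      intro y hy
      have hyP : y ∈ P := by rw [hP]; exact hy
      by_cases hyF : y ∈ F
      · exact le_of_eq (hρeq y hyF).symm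
      · exact hρle y ⟨hyP, hyF⟩
    obtain ⟨y0, hy0⟩ := hne
    have hy0' : ∀ j, r j ≤ ⟪q j, y0⟫ := by rw [hP] at hy0; exact hy0
    obtain ⟨c, hc0, hcx, -⟩ := farkas_affine q r ⟨y0, hy0'⟩ x ρ hbound
    exact ⟨c, hc0, hcx⟩
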